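/- Let A be an n×n positive semidefinite Hermitian matrix over ℂ such that every eigenvalue of A is at least 1 and the trace of A equals 2n. Then det(A) ≥ n + 1. -/

import Mathlib

open ComplexOrder

lemma one_add_sum_le_prod_aux (s : Finset (Fin n)) (x : Fin n → ℝ)
    (hx : ∀ i, 1 ≤ x i) : 1 + ∑ i ∈ s, (x i - 1) ≤ ∏ i ∈ s, x i := by
  classical
  induction s using Finset.induction with
  | empty => simp
  | @insert a s hi ih =>
    rw [Finset.sum_insert hi, Finset.prod_insert hi]
    have h1 : (0:ℝ) ≤ ∑ i ∈ s, (x i - 1) :=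
      Finset.sum_nonneg fun i _ => by linarith [hx i]
    nlinarith [hx a]

/-- A PSD Hermitian matrix whose eigenvalues are all at least 1 and whose trace
is `2n` has determinant at least `n + 1`. -/
theorem det_ge_of_eigenvalues_ge_one_trace_eq
    (n : ℕ) (A : Matrix (Fin n) (Fin n) ℂ) (hA : A.PosSemidef)
    (h1 : ∀ i, 1 ≤ hA.1.eigenvalues i)
    (htr : A.trace = 2 * n) :
    (n : ℝ) + 1 ≤ A.det.re := by
  have hdet : A.det = ∏ i, (hA.1.eigenvalues i : ℂ) := hA.1.det_eq_prod_eigenvalues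
  have hdre : A.det.re = ∏ i, hA.1.eigenvalues i := by
    rw [hdet, ← Complex.ofReal_prod, Complex.ofReal_re]
  have htrace : A.trace = ∑ i, (hA.1.eigenvalues i : ℂ) := by
    exact hA.1.trace_eq_sum_eigenvalues
  have hsum : ∑ i, hA.1.eigenvalues i = 2 * n := by
    have := htr.symm.trans htrace
    have := congrArg Complex.re this
    simpa [← Complex.ofReal_sum] using this.symm
  have key := one_add_sum_le_prod_aux (n := n) Finset.univ hA.1.eigenvalues h1
  rw [Finset.sum_sub_distrib, hsum] at key
  simp only [Finset.sum_const, Finset.card_univ, Fintype.card_fin, nsmul_eq_mul, mul_one] at key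
  rw [hdre]
  linarith
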